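/- arXiv:math/0310254 — 3 statements merged into one kernel-verified Lean document; each statement's English description precedes it below -/
import Mathlib

section
/- Let p be a prime, let L ⊆ K be a purely inseparable extension of fields of characteristic p, and let n be a positive integer coprime to p. Then the inclusion L ⊆ K induces a group isomorphism L^×/(L^×)^n ≅ K^×/(K^×)^n; equivalently, the group homomorphism L^×/(L^×)^n → K^×/(K^×)^n induced by the inclusion of unit groups L^× ⊆ K^× is bijective. (Lemma 6.1 of the paper.) -/
/-- In a commutative group, if `n` is coprime to `q`, every element is an `n`-th power
times a `ℤ`-power of its `q`-th power. -/
private lemma split_pow {G : Type*} [CommGroup G] (b : G) (n q : ℕ) (hq : Nat.Coprime n q) :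
    ∃ (d : G) (v : ℤ), b = d ^ n * (b ^ q) ^ v := by
  obtain ⟨u, v, huv⟩ := Nat.isCoprime_iff_coprime.mpr hq
  refine ⟨b ^ u, v, ?_⟩
  have : (b ^ u) ^ (n : ℤ) * (b ^ (q : ℤ)) ^ v = b ^ (u * n + q * v) := by
    rw [← zpow_mul, ← zpow_mul, ← zpow_add]
  rw [← zpow_natCast (b ^ u) n, ← zpow_natCast b q, this]
  have h1 : u * (n : ℤ) + (q : ℤ) * v = 1 := by linarith [huv]
  rw [h1, zpow_one]

/-- **Lemma 6.1.** Let `p` be a prime, `L ⊆ K` a purely inseparable extension of fields of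
characteristic `p`, and `n` a positive integer coprime to `p`. Then the inclusion `L ⊆ K`
induces a group isomorphism `Lˣ/(Lˣ)ⁿ ≅ Kˣ/(Kˣ)ⁿ`, i.e. the homomorphism induced by the
inclusion of unit groups is bijective. -/
theorem purelyInseparable_units_mod_nth_powers_bijective
    (p : ℕ) (hp : p.Prime) (L K : Type*) [Field L] [Field K] [Algebra L K]
    [CharP L p] [CharP K p]
    (hins : ∀ x : K, ∃ m : ℕ, x ^ p ^ m ∈ (algebraMap L K).range)
    (n : ℕ) (hn : 0 < n) (hcop : Nat.Coprime n p) :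
    Function.Bijective
      (QuotientGroup.map
        (powMonoidHom n : Lˣ →* Lˣ).range
        (powMonoidHom n : Kˣ →* Kˣ).range
        (Units.map (algebraMap L K : L →* K))
        (by
          rintro x ⟨y, hy⟩
          exact ⟨Units.map (algebraMap L K : L →* K) y,
            by rw [← hy]; simp [powMonoidHom_apply, map_pow]⟩)) := by
  set f : L →* K := (algebraMap L K : L →* K) with hf
  have hfinj : Function.Injective f := (algebraMap L K).injective
  have hUinj : Function.Injective (Units.map f) := Units.map_injective hfinj
  -- every unit of K has a p-power that comes from a unit of L
  have haux : ∀ b : Kˣ, ∃ (m : ℕ) (c : Lˣ), Units.map f c = b ^ p ^ m := by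
    intro b
    obtain ⟨m, c, hc⟩ := hins (b : K)
    have hc0 : c ≠ 0 := by
      rintro rfl
      simp only [map_zero] at hc
      exact (pow_ne_zero _ b.ne_zero) hc.symm
    refine ⟨m, Units.mk0 c hc0, ?_⟩
    ext
    simpa [hf] using hc
  constructor
  · rw [injective_iff_map_eq_one]
    intro x hx
    induction x using QuotientGroup.induction_on with
    | H a =>
      rw [QuotientGroup.map_mk, QuotientGroup.eq_one_iff] at hx
      obtain ⟨b, hb⟩ := hx
      simp only [powMonoidHom_apply] at hb
      obtain ⟨m, c, hc⟩ := haux b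
      -- a ^ p ^ m = c ^ n
      have key : a ^ p ^ m = c ^ n := by
        apply hUinj
        rw [map_pow, map_pow, hc, ← hb, ← pow_mul, ← pow_mul, mul_comm]
      obtain ⟨d, v, hd⟩ := split_pow a n (p ^ m) (hcop.pow_right m)
      rw [QuotientGroup.eq_one_iff]
      refine ⟨d * c ^ v, ?_⟩
      simp only [powMonoidHom_apply]
      rw [hd, key, mul_pow, ← zpow_natCast c n, ← zpow_mul, mul_comm (n : ℤ) v, zpow_mul,
        zpow_natCast]
  · intro y
    induction y using QuotientGroup.induction_on with
    | H b =>
      obtain ⟨m, c, hc⟩ := haux b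
      obtain ⟨d, v, hd⟩ := split_pow b n (p ^ m) (hcop.pow_right m)
      refine ⟨QuotientGroup.mk (c ^ v), ?_⟩
      rw [QuotientGroup.map_mk, map_zpow, hc]
      rw [QuotientGroup.eq]
      refine ⟨d, ?_⟩
      simp only [powMonoidHom_apply]
      rw [eq_comm, inv_mul_eq_iff_eq_mul, mul_comm]
      exact hd
end

section
/- Let p be a prime, let L ⊆ K be a purely inseparable extension of fields of characteristic p, and let n be a positive integer coprime to p. Then for every x ∈ K^× there exist y ∈ L^× and z ∈ K^× such that x = y·z^n. (Surjectivity part of Lemma 6.1: every class in K^×/(K^×)^n is represented by an element of L^×.) -/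
/-- **Surjectivity part of Lemma 6.1.** Let `p` be a prime, `L ⊆ K` a purely inseparable
extension of fields of characteristic `p`, and `n` a positive integer coprime to `p`. Then
every `x ∈ Kˣ` can be written as `x = y * zⁿ` with `y ∈ Lˣ` and `z ∈ Kˣ`; i.e. every class in
`Kˣ/(Kˣ)ⁿ` is represented by an element of `Lˣ`. -/
theorem purelyInseparable_units_mod_nth_powers_surjective
    (p : ℕ) (hp : p.Prime) (L K : Type*) [Field L] [Field K] [Algebra L K]
    [CharP L p] [CharP K p]
    (hins : ∀ x : K, ∃ m : ℕ, x ^ p ^ m ∈ (algebraMap L K).range)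
    (n : ℕ) (hn : 0 < n) (hcop : Nat.Coprime n p) :
    ∀ x : K, x ≠ 0 → ∃ y : L, y ≠ 0 ∧ ∃ z : K, z ≠ 0 ∧ x = algebraMap L K y * z ^ n := by
  intro x hx
  obtain ⟨m, y, hy⟩ := hins x
  have hy0 : y ≠ 0 := by
    intro h
    apply pow_ne_zero (p ^ m) hx
    rw [← hy, h, map_zero]
  have hcop' : IsCoprime ((p ^ m : ℕ) : ℤ) (n : ℤ) := by
    rw [Int.isCoprime_iff_gcd_eq_one]
    exact_mod_cast (Nat.Coprime.pow_left m hcop.symm)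
  obtain ⟨a, b, hab⟩ := hcop'
  refine ⟨y ^ a, zpow_ne_zero a hy0, x ^ b, zpow_ne_zero b hx, ?_⟩
  have : algebraMap L K (y ^ a) = (x ^ (p ^ m : ℕ)) ^ a := by
    rw [map_zpow₀, hy]
  rw [this]
  rw [← zpow_natCast (x ^ b) n, ← zpow_mul, ← zpow_natCast x (p ^ m), ← zpow_mul]
  rw [← zpow_add₀ hx]
  rw [mul_comm (↑(p^m):ℤ) a, hab, zpow_one]
end

section
/- Let G be a commutative group, H ≤ G a subgroup, p a prime, and n a positive integer coprime to p. Assume that for every g ∈ G there exists an integer m ≥ 0 with g^(p^m) ∈ H. Then the inclusion H → G induces a group isomorphism H/H^n ≅ G/G^n, i.e., the induced homomorphism from H modulo the subgroup of n-th powers of H to G modulo the subgroup of n-th powers of G is bijective. (This is the group-theoretic core of the proof of Lemma 6.1: since p^m and n are coprime, writing 1 = a·p^m + b·n gives both surjectivity and injectivity.) -/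
/-- Bezout data for `n` coprime to `p ^ m`. -/
theorem aux_bezout (p n m : ℕ) (hcop : Nat.Coprime n p) :
    ∃ u v : ℤ, u * n + v * (p ^ m : ℕ) = 1 := by
  have h : IsCoprime (n : ℤ) ((p ^ m : ℕ) : ℤ) := by
    rw [Nat.isCoprime_iff_coprime]
    exact hcop.pow_right m
  obtain ⟨u, v, huv⟩ := h
  exact ⟨u, v, huv⟩

/-- **Group-theoretic core of Lemma 6.1.** Let `G` be a commutative group, `H ≤ G` a subgroup,
`p` a prime and `n` a positive integer coprime to `p`. If for every `g ∈ G` there is an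
`m ≥ 0` with `g ^ (p ^ m) ∈ H`, then the inclusion `H → G` induces a group isomorphism
`H/Hⁿ ≅ G/Gⁿ`, i.e. the induced homomorphism on the quotients by the subgroups of `n`-th
powers is bijective. -/
theorem subgroup_mod_nth_powers_bijective
    (G : Type*) [CommGroup G] (H : Subgroup G) (p : ℕ) (hp : p.Prime)
    (n : ℕ) (hn : 0 < n) (hcop : Nat.Coprime n p)
    (hpow : ∀ g : G, ∃ m : ℕ, g ^ p ^ m ∈ H) :
    Function.Bijective
      (QuotientGroup.map
        (powMonoidHom n : H →* H).range
        (powMonoidHom n : G →* G).range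
        H.subtype
        (by
          rintro x ⟨y, hy⟩
          exact ⟨(y : G), by rw [← hy]; simp [powMonoidHom_apply]⟩)) := by
  constructor
  · -- injectivity
    intro x y hxy
    induction x using QuotientGroup.induction_on with | H x => ?_
    induction y using QuotientGroup.induction_on with | H y => ?_
    rw [QuotientGroup.map_mk, QuotientGroup.map_mk, QuotientGroup.eq] at hxy
    obtain ⟨g, hg⟩ := hxy
    simp only [powMonoidHom_apply] at hg
    -- hg : g ^ n = (x : G)⁻¹ * y
    obtain ⟨m, hm⟩ := hpow g
    obtain ⟨u, v, huv⟩ := aux_bezout p n m hcop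
    have hgn : g ^ n ∈ H := by
      rw [hg]; exact H.mul_mem (H.inv_mem x.2) y.2
    -- g itself lies in H
    have hgH : g ∈ H := by
      have : g = (g ^ n) ^ u * (g ^ p ^ m) ^ v := by
        rw [← zpow_natCast g n, ← zpow_natCast g (p ^ m), ← zpow_mul, ← zpow_mul,
          ← zpow_add, mul_comm (n : ℤ) u, mul_comm ((p ^ m : ℕ) : ℤ) v]
        rw [show ((p ^ m : ℕ) : ℤ) = ((p : ℤ) ^ m) by push_cast; ring] at huv ⊢
        rw [huv, zpow_one]
      rw [this]
      exact H.mul_mem (H.zpow_mem hgn u) (H.zpow_mem hm v)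
    rw [QuotientGroup.eq]
    refine ⟨⟨g, hgH⟩, ?_⟩
    simp only [powMonoidHom_apply]
    ext
    push_cast
    exact hg
  · -- surjectivity
    intro z
    induction z using QuotientGroup.induction_on with | H g => ?_
    obtain ⟨m, hm⟩ := hpow g
    obtain ⟨u, v, huv⟩ := aux_bezout p n m hcop
    have hmem : g ^ ((p ^ m : ℕ) * v : ℤ) ∈ H := by
      rw [zpow_mul, zpow_natCast]
      exact H.zpow_mem hm v
    refine ⟨QuotientGroup.mk ⟨g ^ ((p ^ m : ℕ) * v : ℤ), hmem⟩, ?_⟩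
    rw [QuotientGroup.map_mk, QuotientGroup.eq]
    refine ⟨g ^ u, ?_⟩
    simp only [powMonoidHom_apply, Subgroup.coe_subtype]
    show (g ^ u) ^ n = (g ^ ((p ^ m : ℕ) * v : ℤ))⁻¹ * g
    rw [← zpow_natCast (g ^ u) n, ← zpow_mul, ← zpow_neg, ← zpow_add_one]
    congr 1
    linear_combination huv
end
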